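/- (Polygonal Fenchel theorem) Let n ≥ 3 and let A : ZMod n → EuclideanSpace ℝ (Fin 3) be a closed n-gon with A i ≠ A (i+1) for all i. Then the sum of the external angles of the polygon is at least 2π: ∑ i, (π − ∠ (A (i−1)) (A i) (A (i+1))) ≥ 2π. -/

import Mathlib

section Aux

open Real InnerProductGeometry Finset

local notation "⟪" x ", " y "⟫" => @inner ℝ _ _ x y

variable {V : Type*} [NormedAddCommGroup V] [InnerProductSpace ℝ V]

private lemma arccos_antitone {x y : ℝ} (h : x ≤ y) : Real.arccos y ≤ Real.arccos x := by
  simp only [Real.arccos_eq_pi_div_two_sub_arcsin]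
  have := Real.monotone_arcsin h
  linarith

private lemma unit_angle_eq_arccos {x y : V} (hx : ‖x‖ = 1) (hy : ‖y‖ = 1) :
    angle x y = Real.arccos ⟪x, y⟫ := by
  rw [angle, hx, hy]; norm_num

private lemma unit_inner_le_one {x y : V} (hx : ‖x‖ = 1) (hy : ‖y‖ = 1) :
    |⟪x, y⟫| ≤ 1 := by
  have := abs_real_inner_le_norm x y
  rwa [hx, hy, mul_one] at this

private lemma unit_cos_angle {x y : V} (hx : ‖x‖ = 1) (hy : ‖y‖ = 1) :
    Real.cos (angle x y) = ⟪x, y⟫ := by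
  rw [cos_angle, hx, hy]; norm_num

private lemma norm_residual {x y : V} (hx : ‖x‖ = 1) (hy : ‖y‖ = 1) :
    ‖x - ⟪x, y⟫ • y‖ = Real.sin (angle x y) := by
  have hc : Real.cos (angle x y) = ⟪x, y⟫ := unit_cos_angle hx hy
  have h1 : ‖x - ⟪x, y⟫ • y‖ ^ 2 = 1 - ⟪x, y⟫ ^ 2 := by
    rw [norm_sub_sq_real, real_inner_smul_right, norm_smul, hx]
    simp [Real.norm_eq_abs, mul_pow, sq_abs, hy]
    ring
  have h2 : Real.sin (angle x y) ^ 2 = 1 - ⟪x, y⟫ ^ 2 := by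
    have := Real.sin_sq_add_cos_sq (angle x y)
    rw [hc] at this; linarith
  have hs : 0 ≤ Real.sin (angle x y) :=
    Real.sin_nonneg_of_nonneg_of_le_pi (angle_nonneg _ _) (angle_le_pi _ _)
  calc ‖x - ⟪x, y⟫ • y‖ = Real.sqrt (‖x - ⟪x, y⟫ • y‖ ^ 2) := (Real.sqrt_sq (norm_nonneg _)).symm
    _ = Real.sqrt (Real.sin (angle x y) ^ 2) := by rw [h1, ← h2]
    _ = Real.sin (angle x y) := Real.sqrt_sq hs

private lemma unit_angle_triangle {x y z : V} (hx : ‖x‖ = 1) (hy : ‖y‖ = 1) (hz : ‖z‖ = 1) :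
    angle x z ≤ angle x y + angle y z := by
  set α := angle x y with hα
  set β := angle y z with hβ
  have hα0 : 0 ≤ α := angle_nonneg x y
  have hβ0 : 0 ≤ β := angle_nonneg y z
  rcases le_or_gt π (α + β) with hle | hlt
  · exact le_trans (angle_le_pi x z) hle
  have hkey : Real.cos (α + β) ≤ ⟪x, z⟫ := by
    have hca : Real.cos α = ⟪x, y⟫ := unit_cos_angle hx hy
    have hcb : Real.cos β = ⟪y, z⟫ := unit_cos_angle hy hz
    have hsa : ‖x - ⟪x, y⟫ • y‖ = Real.sin α := norm_residual hx hy
    have hsb : ‖z - ⟪z, y⟫ • y‖ = Real.sin β := by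
      rw [norm_residual hz hy, angle_comm]
    have hcs : -(‖x - ⟪x, y⟫ • y‖ * ‖z - ⟪z, y⟫ • y‖) ≤ ⟪x - ⟪x, y⟫ • y, z - ⟪z, y⟫ • y⟫ := by
      have h1 := abs_real_inner_le_norm (x - ⟪x, y⟫ • y) (z - ⟪z, y⟫ • y)
      have h2 := neg_abs_le ⟪x - ⟪x, y⟫ • y, z - ⟪z, y⟫ • y⟫
      linarith
    have hyy : ⟪y, y⟫ = (1 : ℝ) := by
      rw [real_inner_self_eq_norm_mul_norm, hy]; norm_num
    have hexp : ⟪x - ⟪x, y⟫ • y, z - ⟪z, y⟫ • y⟫ = ⟪x, z⟫ - ⟪x, y⟫ * ⟪y, z⟫ := by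
      rw [inner_sub_left, inner_sub_right, inner_sub_right, real_inner_smul_left,
        real_inner_smul_left, real_inner_smul_right, real_inner_smul_right, hyy,
        real_inner_comm z y, real_inner_comm y x]
      ring
    rw [Real.cos_add, hca, hcb]
    rw [hsa, hsb, hexp] at hcs
    linarith
  have h1 : angle x z = Real.arccos ⟪x, z⟫ := unit_angle_eq_arccos hx hz
  have h2 : Real.arccos (Real.cos (α + β)) = α + β :=
    Real.arccos_cos (by linarith) hlt.le
  rw [h1, ← h2]
  exact arccos_antitone hkey

/-- The triangle inequality for angles between vectors. -/
lemma angle_triangle' (x y z : V) : angle x z ≤ angle x y + angle y z := by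
  rcases eq_or_ne x 0 with rfl | hx
  · rw [angle_zero_left, angle_zero_left]
    linarith [angle_nonneg y z]
  rcases eq_or_ne z 0 with rfl | hz
  · rw [angle_zero_right, angle_zero_right]
    linarith [angle_nonneg x y]
  rcases eq_or_ne y 0 with rfl | hy
  · rw [angle_zero_right, angle_zero_left]
    linarith [angle_le_pi x z]
  have nx : (0:ℝ) < ‖x‖⁻¹ := inv_pos.2 (norm_pos_iff.2 hx)
  have ny : (0:ℝ) < ‖y‖⁻¹ := inv_pos.2 (norm_pos_iff.2 hy)
  have nz : (0:ℝ) < ‖z‖⁻¹ := inv_pos.2 (norm_pos_iff.2 hz)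
  have unit : ∀ v : V, v ≠ 0 → ‖‖v‖⁻¹ • v‖ = 1 := fun v hv => by
    rw [norm_smul, norm_inv, norm_norm, inv_mul_cancel₀ (norm_ne_zero_iff.2 hv)]
  have h := unit_angle_triangle (unit x hx) (unit y hy) (unit z hz)
  rwa [angle_smul_left_of_pos _ _ nx, angle_smul_left_of_pos _ _ ny,
    angle_smul_right_of_pos _ _ ny, angle_smul_right_of_pos _ _ nz,
    angle_smul_left_of_pos _ _ nx, angle_smul_right_of_pos _ _ nz] at h

local notation "E3" => EuclideanSpace ℝ (Fin 3)

private lemma exists_unit_perp (x : E3) : ∃ w : E3, ‖w‖ = 1 ∧ ⟪x, w⟫ = 0 := by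
  rcases eq_or_ne x 0 with rfl | hx
  · exact ⟨EuclideanSpace.single 0 1, by simp, by simp⟩
  have hne : ((ℝ ∙ x)ᗮ : Submodule ℝ E3) ≠ ⊥ := by
    intro hbot
    have htop : (ℝ ∙ x : Submodule ℝ E3) = ⊤ := Submodule.orthogonal_eq_bot_iff.1 hbot
    have h1 : Module.finrank ℝ (ℝ ∙ x : Submodule ℝ E3) = 1 := finrank_span_singleton hx
    rw [htop] at h1
    have h3 : Module.finrank ℝ E3 = 3 := by simp
    rw [finrank_top, h3] at h1
    norm_num at h1
  rcases Submodule.exists_mem_ne_zero_of_ne_bot hne with ⟨w', hw'mem, hw'⟩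
  refine ⟨‖w'‖⁻¹ • w', norm_smul_inv_norm hw', ?_⟩
  have h0 : ⟪x, w'⟫ = 0 := hw'mem x (Submodule.mem_span_singleton_self x)
  rw [real_inner_smul_right, h0, mul_zero]

set_option maxHeartbeats 1000000 in
/-- Geodesic interpolation on the unit sphere of `ℝ³`. -/
private lemma exists_geodesic_point {x y : E3} (hx : ‖x‖ = 1) (hy : ‖y‖ = 1) {r : ℝ}
    (hr0 : 0 ≤ r) (hr1 : r ≤ angle x y) :
    ∃ q : E3, ‖q‖ = 1 ∧ angle x q = r ∧ angle q y = angle x y - r := by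
  have hd0 : 0 ≤ angle x y := angle_nonneg x y
  have hdpi : angle x y ≤ π := angle_le_pi x y
  have hxy : ⟪x, y⟫ = Real.cos (angle x y) := (unit_cos_angle hx hy).symm
  have hrpi : r ≤ π := le_trans hr1 hdpi
  have hxx : ⟪x, x⟫ = (1:ℝ) := by
    rw [real_inner_self_eq_norm_mul_norm, hx]; norm_num
  have hx0 : x ≠ 0 := by intro h; rw [h] at hx; simp at hx
  have norm_of_inner_one : ∀ q : E3, ⟪q, q⟫ = (1:ℝ) → ‖q‖ = 1 := by
    intro q hq
    have h := real_inner_self_eq_norm_mul_norm q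
    rw [hq] at h
    nlinarith [norm_nonneg q]
  have angle_of_inner : ∀ (q : E3) (t : ℝ), ‖q‖ = 1 → 0 ≤ t → t ≤ π →
      ⟪x, q⟫ = Real.cos t → angle x q = t := by
    intro q t hq ht0 ht1 hinner
    rw [unit_angle_eq_arccos hx hq, hinner, Real.arccos_cos ht0 ht1]
  have angle_of_inner' : ∀ (q : E3) (t : ℝ), ‖q‖ = 1 → 0 ≤ t → t ≤ π →
      ⟪q, y⟫ = Real.cos t → angle q y = t := by
    intro q t hq ht0 ht1 hinner
    rw [unit_angle_eq_arccos hq hy, hinner, Real.arccos_cos ht0 ht1]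
  rcases eq_or_lt_of_le hdpi with hdeq | hdlt
  · -- antipodal case : y = -x
    have hy' : y = -x := by
      rcases angle_eq_pi_iff.1 hdeq with ⟨_, t, ht, hyt⟩
      have hn : ‖t • x‖ = 1 := by rw [← hyt]; exact hy
      rw [norm_smul, hx, mul_one, Real.norm_eq_abs, abs_of_neg ht] at hn
      have : t = -1 := by linarith
      rw [hyt, this, neg_one_smul]
    rcases exists_unit_perp x with ⟨w, hw1, hw2⟩
    have hww : ⟪w, w⟫ = (1:ℝ) := by
      rw [real_inner_self_eq_norm_mul_norm, hw1]; norm_num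
    have hwx : ⟪w, x⟫ = (0:ℝ) := by rw [real_inner_comm]; exact hw2
    set q : E3 := Real.cos r • x + Real.sin r • w with hqdef
    have hq2 : ⟪q, q⟫ = (1:ℝ) := by
      simp only [hqdef, inner_add_add_self, real_inner_smul_left, real_inner_smul_right,
        hxx, hww, hw2, hwx]
      linear_combination Real.sin_sq_add_cos_sq r
    have hqn : ‖q‖ = 1 := norm_of_inner_one q hq2
    have hxq : ⟪x, q⟫ = Real.cos r := by
      rw [hqdef, inner_add_right, real_inner_smul_right, real_inner_smul_right, hxx, hw2]
      ring
    have hqy : ⟪q, y⟫ = Real.cos (π - r) := by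
      rw [hy', inner_neg_right, real_inner_comm, hxq, Real.cos_pi_sub]
    refine ⟨q, hqn, angle_of_inner q r hqn hr0 hrpi hxq, ?_⟩
    rw [angle_of_inner' q (π - r) hqn (by linarith) (by linarith) hqy, hdeq]
  · -- d < π
    rcases eq_or_lt_of_le hd0 with hdz | hdpos
    · have hr : r = 0 := le_antisymm (hdz ▸ hr1) hr0
      exact ⟨x, hx, by rw [hr]; exact angle_self hx0, by rw [hr, sub_zero]⟩
    · -- 0 < angle x y < π
      have hs : 0 < Real.sin (angle x y) := Real.sin_pos_of_pos_of_lt_pi hdpos hdlt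
      have hyy : ⟪y, y⟫ = (1:ℝ) := by
        rw [real_inner_self_eq_norm_mul_norm, hy]; norm_num
      have hyx : ⟪y, x⟫ = Real.cos (angle x y) := by rw [real_inner_comm]; exact hxy
      set d := angle x y
      set q : E3 := (Real.sin (d - r) / Real.sin d) • x + (Real.sin r / Real.sin d) • y
        with hqdef
      have hsdr : Real.sin (d - r) = Real.sin d * Real.cos r - Real.cos d * Real.sin r :=
        Real.sin_sub d r
      have hq2 : ⟪q, q⟫ = (1:ℝ) := by
        simp only [hqdef, inner_add_add_self, real_inner_smul_left, real_inner_smul_right,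
          hxx, hyy, hyx, hxy]
        field_simp
        linear_combination (Real.sin (d - r) + Real.sin d * Real.cos r
            + Real.cos d * Real.sin r) * hsdr
          - Real.sin r ^ 2 * Real.sin_sq_add_cos_sq d
          + Real.sin d ^ 2 * Real.sin_sq_add_cos_sq r
      have hqn : ‖q‖ = 1 := norm_of_inner_one q hq2
      have hxq : ⟪x, q⟫ = Real.cos r := by
        simp only [hqdef, inner_add_right, real_inner_smul_right, hxx, hxy]
        field_simp
        linear_combination hsdr
      have hqy : ⟪q, y⟫ = Real.cos (d - r) := by
        simp only [hqdef, inner_add_left, real_inner_smul_left, hyy, hyx, hxy]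
        rw [Real.cos_sub]
        field_simp
        linear_combination Real.cos d * hsdr - Real.sin r * Real.sin_sq_add_cos_sq d
      exact ⟨q, hqn, angle_of_inner q r hqn hr0 hrpi hxq,
        angle_of_inner' q (d - r) hqn (by linarith) (by linarith) hqy⟩

end Aux

open Real EuclideanGeometry

set_option maxHeartbeats 1600000 in
/-- Polygonal Fenchel theorem: the total external angle of a closed polygon in
`ℝ³` is at least `2π`. -/
theorem polygonal_fenchel
    (n : ℕ) (hn : 3 ≤ n) [NeZero n]
    (A : ZMod n → EuclideanSpace ℝ (Fin 3))
    (hA : ∀ i, A i ≠ A (i + 1)) :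
    2 * π ≤ ∑ i : ZMod n, (π - ∠ (A (i - 1)) (A i) (A (i + 1))) := by
  classical
  set v : ZMod n → EuclideanSpace ℝ (Fin 3) := fun i => A (i + 1) - A i with hv
  have hvne : ∀ i, v i ≠ 0 := fun i => sub_ne_zero.mpr (hA i).symm
  -- Step 1: each external angle is the turning angle of consecutive edge vectors.
  have hterm : ∀ i : ZMod n, π - ∠ (A (i - 1)) (A i) (A (i + 1))
      = InnerProductGeometry.angle (v (i - 1)) (v i) := by
    intro i
    have h1 : ∠ (A (i - 1)) (A i) (A (i + 1))
        = InnerProductGeometry.angle (A (i - 1) - A i) (A (i + 1) - A i) := rfl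
    have h2 : v (i - 1) = -(A (i - 1) - A i) := by
      simp only [hv, sub_add_cancel, neg_sub]
    rw [h1, h2, InnerProductGeometry.angle_neg_left]
  rw [Finset.sum_congr rfl (fun i _ => hterm i)]
  have hre : ∑ i : ZMod n, InnerProductGeometry.angle (v (i - 1)) (v i)
      = ∑ i : ZMod n, InnerProductGeometry.angle (v i) (v (i + 1)) := by
    refine Fintype.sum_equiv (Equiv.subRight (1 : ZMod n)) _ _ (fun i => ?_)
    simp [Equiv.subRight, sub_add_cancel]
  rw [hre]
  by_contra hcon
  push_neg at hcon
  -- unit edge vectors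
  set u : ZMod n → EuclideanSpace ℝ (Fin 3) := fun i => ‖v i‖⁻¹ • v i with hu
  have hvpos : ∀ i, (0:ℝ) < ‖v i‖ := fun i => norm_pos_iff.2 (hvne i)
  have hunorm : ∀ i, ‖u i‖ = 1 := by
    intro i
    rw [hu]
    rw [norm_smul, norm_inv, norm_norm, inv_mul_cancel₀ (norm_ne_zero_iff.2 (hvne i))]
  have huv : ∀ i j : ZMod n, InnerProductGeometry.angle (u i) (u j)
      = InnerProductGeometry.angle (v i) (v j) := by
    intro i j
    rw [hu, InnerProductGeometry.angle_smul_left_of_pos _ _ (inv_pos.2 (hvpos i)),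
      InnerProductGeometry.angle_smul_right_of_pos _ _ (inv_pos.2 (hvpos j))]
  set w : ℕ → EuclideanSpace ℝ (Fin 3) := fun k => u ((k : ℕ) : ZMod n) with hw
  set dd : ℕ → ℝ := fun k => InnerProductGeometry.angle (w k) (w (k + 1)) with hdd
  have hd0 : ∀ k, 0 ≤ dd k := fun k => InnerProductGeometry.angle_nonneg _ _
  have hdpi : ∀ k, dd k ≤ π := fun k => InnerProductGeometry.angle_le_pi _ _
  -- sum over ZMod n as a sum over range n
  have hbij : Function.Bijective (fun k : Fin n => ((k : ℕ) : ZMod n)) := by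
    rw [Fintype.bijective_iff_surjective_and_card]
    exact ⟨fun i => ⟨⟨i.val, ZMod.val_lt i⟩, ZMod.natCast_zmod_val i⟩, by simp [ZMod.card]⟩
  have hzsum : ∀ f : ZMod n → ℝ,
      ∑ i : ZMod n, f i = ∑ k ∈ Finset.range n, f ((k : ℕ) : ZMod n) := by
    intro f
    rw [← Fin.sum_univ_eq_sum_range (fun k => f ((k : ℕ) : ZMod n)) n]
    exact (Fintype.sum_bijective _ hbij _ _ (fun k => rfl)).symm
  set L : ℝ := ∑ k ∈ Finset.range n, dd k with hL
  have hLlt : L < 2 * π := by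
    have h1 : ∑ i : ZMod n, InnerProductGeometry.angle (v i) (v (i + 1))
        = ∑ i : ZMod n, InnerProductGeometry.angle (u i) (u (i + 1)) := by
      exact Finset.sum_congr rfl fun i _ => (huv i (i + 1)).symm
    have h2 : ∑ i : ZMod n, InnerProductGeometry.angle (u i) (u (i + 1)) = L := by
      rw [hzsum]
      refine Finset.sum_congr rfl fun k hk => ?_
      simp only [hdd, hw]
      norm_cast
    rw [h1, h2] at hcon
    exact hcon
  have hL0 : 0 ≤ L := Finset.sum_nonneg fun k _ => hd0 k
  have hLhalf : L / 2 < π := by linarith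
  -- prefix sums
  set S : ℕ → ℝ := fun k => ∑ j ∈ Finset.range k, dd j with hS
  have hSmono : ∀ a b, a ≤ b → S a ≤ S b := by
    intro a b hab
    have : S b - S a = ∑ j ∈ Finset.Ico a b, dd j := by
      rw [hS]
      rw [Finset.sum_Ico_eq_sub _ hab]
    have h2 : 0 ≤ ∑ j ∈ Finset.Ico a b, dd j := Finset.sum_nonneg fun j _ => hd0 j
    linarith
  -- chain triangle inequality
  have hwnorm : ∀ k, ‖w k‖ = 1 := fun k => hunorm _
  have hwne : ∀ k, w k ≠ 0 := by
    intro k h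
    have := hwnorm k
    rw [h] at this
    simp at this
  have hchain' : ∀ a b, a ≤ b →
      InnerProductGeometry.angle (w a) (w b) ≤ ∑ j ∈ Finset.Ico a b, dd j := by
    intro a b hab
    induction b, hab using Nat.le_induction with
    | base =>
      rw [Finset.Ico_self, Finset.sum_empty, InnerProductGeometry.angle_self (hwne a)]
    | succ b hab ih =>
      calc InnerProductGeometry.angle (w a) (w (b + 1))
          ≤ InnerProductGeometry.angle (w a) (w b)
            + InnerProductGeometry.angle (w b) (w (b + 1)) := angle_triangle' _ _ _
        _ ≤ (∑ j ∈ Finset.Ico a b, dd j) + dd b := add_le_add ih le_rfl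
        _ = ∑ j ∈ Finset.Ico a (b + 1), dd j := (Finset.sum_Ico_succ_top hab _).symm
  have hchain : ∀ a b, a ≤ b →
      InnerProductGeometry.angle (w a) (w b) ≤ S b - S a := by
    intro a b hab
    have heq : ∑ j ∈ Finset.Ico a b, dd j = S b - S a := Finset.sum_Ico_eq_sub _ hab
    rw [← heq]
    exact hchain' a b hab
  -- choose the bisecting edge
  set k : ℕ := Nat.findGreatest (fun j => S j ≤ L / 2) (n - 1) with hk
  have hkle : k ≤ n - 1 := Nat.findGreatest_le _
  have hkn : k < n := lt_of_le_of_lt hkle (by omega)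
  have hSk : S k ≤ L / 2 := by
    have h0 : S 0 ≤ L / 2 := by
      simp only [hS, Finset.range_zero, Finset.sum_empty]
      linarith
    have := Nat.findGreatest_spec (P := fun j => S j ≤ L / 2) (m := 0) (n := n - 1)
      (Nat.zero_le _) h0
    simpa [hk] using this
  have hSk1 : L / 2 ≤ S (k + 1) := by
    rcases eq_or_lt_of_le hkle with heq | hlt
    · have : k + 1 = n := by omega
      rw [this]
      have : S n = L := by rw [hS, hL]
      rw [this]
      linarith
    · have := Nat.findGreatest_is_greatest (Nat.lt_succ_self k) hlt
      push_neg at this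
      linarith [this]
  have hSks : S (k + 1) = S k + dd k := Finset.sum_range_succ dd k
  set r : ℝ := L / 2 - S k with hr
  have hr0 : 0 ≤ r := by rw [hr]; linarith
  have hrd : r ≤ dd k := by rw [hr]; linarith
  -- the geodesic bisecting point q
  obtain ⟨q, hq1, hq2, hq3⟩ := exists_geodesic_point (hwnorm k) (hwnorm (k + 1)) hr0 hrd
  -- every vertex is close to the curve: both arcs through it are short
  have hwn0 : w n = w 0 := by
    simp only [hw, ZMod.natCast_self, Nat.cast_zero]
  have hbound : ∀ i, i ≤ n →
      InnerProductGeometry.angle (w 0) (w i) + InnerProductGeometry.angle (w i) q ≤ L / 2 := by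
    intro i hin
    rcases le_or_gt i k with hik | hki
    · have t1 : InnerProductGeometry.angle (w 0) (w i) ≤ S i - S 0 := hchain 0 i (Nat.zero_le _)
      have t2 : InnerProductGeometry.angle (w i) q
          ≤ InnerProductGeometry.angle (w i) (w k) + InnerProductGeometry.angle (w k) q :=
        angle_triangle' _ _ _
      have t3 : InnerProductGeometry.angle (w i) (w k) ≤ S k - S i := hchain i k hik
      have hS0 : S 0 = 0 := by simp [hS]
      rw [hq2] at t2
      rw [hS0] at t1
      calc InnerProductGeometry.angle (w 0) (w i) + InnerProductGeometry.angle (w i) q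
          ≤ (S i - 0) + (InnerProductGeometry.angle (w i) (w k) + r) := add_le_add t1 t2
        _ ≤ (S i - 0) + ((S k - S i) + r) := add_le_add le_rfl (add_le_add t3 le_rfl)
        _ = S k + r := by ring
        _ = L / 2 := by rw [hr]; ring
    · have hk1i : k + 1 ≤ i := hki
      have t1 : InnerProductGeometry.angle (w 0) (w i)
          = InnerProductGeometry.angle (w i) (w n) := by
        rw [← hwn0, InnerProductGeometry.angle_comm]
      have t2 : InnerProductGeometry.angle (w i) (w n) ≤ S n - S i := hchain i n hin
      have t3 : InnerProductGeometry.angle (w i) q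
          ≤ InnerProductGeometry.angle (w i) (w (k + 1))
            + InnerProductGeometry.angle (w (k + 1)) q := angle_triangle' _ _ _
      have t4 : InnerProductGeometry.angle (w (k + 1)) (w i) ≤ S i - S (k + 1) :=
        hchain (k + 1) i hk1i
      rw [InnerProductGeometry.angle_comm] at t4
      have t5 : InnerProductGeometry.angle (w (k + 1)) q = dd k - r := by
        rw [InnerProductGeometry.angle_comm]
        exact hq3
      have hSn : S n = L := by rw [hS, hL]
      rw [t1]
      rw [t5] at t3
      calc InnerProductGeometry.angle (w i) (w n) + InnerProductGeometry.angle (w i) q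
          ≤ (S n - S i) + (InnerProductGeometry.angle (w i) (w (k + 1)) + (dd k - r)) :=
            add_le_add t2 t3
        _ ≤ (S n - S i) + ((S i - S (k + 1)) + (dd k - r)) :=
            add_le_add le_rfl (add_le_add t4 le_rfl)
        _ = S n - S (k + 1) + dd k - r := by ring
        _ = L / 2 := by rw [hSn, hSks, hr]; ring
  -- the hemisphere direction
  set m : EuclideanSpace ℝ (Fin 3) := w 0 + q with hm
  have hpos : ∀ i : ZMod n, (0:ℝ) < inner ℝ (u i) m := by
    intro i
    have hj : i.val < n := ZMod.val_lt i
    have hwj : w i.val = u i := by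
      simp only [hw, ZMod.natCast_zmod_val]
    by_contra hle
    push_neg at hle
    rw [hm, inner_add_right] at hle
    rw [← hwj] at hle
    have ha1 : InnerProductGeometry.angle (w i.val) q
        = Real.arccos (inner ℝ (w i.val) q) := unit_angle_eq_arccos (hwnorm _) hq1
    have ha2 : InnerProductGeometry.angle (w 0) (w i.val)
        = Real.arccos (inner ℝ (w i.val) (w 0)) := by
      rw [InnerProductGeometry.angle_comm]
      exact unit_angle_eq_arccos (hwnorm _) (hwnorm _)
    have hle' : (inner ℝ (w i.val) q : ℝ) ≤ -(inner ℝ (w i.val) (w 0) : ℝ) := by linarith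
    have h3 : Real.arccos (-(inner ℝ (w i.val) (w 0) : ℝ)) ≤ Real.arccos (inner ℝ (w i.val) q) :=
      arccos_antitone hle'
    rw [Real.arccos_neg] at h3
    have h4 := hbound i.val hj.le
    rw [ha1, ha2] at h4
    linarith [hLhalf]
  -- contradiction with the closedness of the polygon
  have hsumv : ∑ i : ZMod n, v i = 0 := by
    have : ∑ i : ZMod n, A (i + 1) = ∑ i : ZMod n, A i := by
      refine Fintype.sum_equiv (Equiv.addRight (1 : ZMod n)) _ _ (fun i => ?_)
      simp [Equiv.coe_addRight]
    simp only [hv]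
    rw [Finset.sum_sub_distrib, this, sub_self]
  have hpos' : (0:ℝ) < ∑ i : ZMod n, inner ℝ (v i) m := by
    refine Finset.sum_pos (fun i _ => ?_) ⟨0, Finset.mem_univ 0⟩
    have : (inner ℝ (u i) m : ℝ) = ‖v i‖⁻¹ * inner ℝ (v i) m := by
      rw [hu, real_inner_smul_left]
    have h2 := hpos i
    rw [this] at h2
    have h3 := inv_pos.2 (hvpos i)
    nlinarith
  have hzero : ∑ i : ZMod n, (inner ℝ (v i) m : ℝ) = 0 := by
    rw [← sum_inner, hsumv, inner_zero_left]
  linarith
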